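/- Schur-complement positivity estimate: Let Q(ε) = [[I + M₁(ε), −M₂(ε)], [−M₂(ε)ᵀ, εI]] be symmetric with ‖M₁(ε)‖ ≤ c₁ε and ‖M₂(ε)‖ ≤ c₂ε for ε ∈ [0, ε₀]. Then there exist constants c, ε* > 0 such that the minimum eigenvalue satisfies λ_min(Q(ε)) ≥ cε for all ε ∈ (0, ε*). -/

import Mathlib

attribute [local instance] Matrix.linftyOpNormedAddCommGroup Matrix.linftyOpNormedSpace Matrix.linftyOpNormedRing Matrix.linftyOpNormedAlgebra

open Matrix

lemma entry_abs_le_linfty {m k : Type*} [Fintype m] [Fintype k]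
    (A : Matrix m k ℝ) (i : m) (j : k) : |A i j| ≤ ‖A‖ := by
  have h := Matrix.linfty_opNNNorm_def A
  have h1 : ‖A i j‖₊ ≤ ∑ j', ‖A i j'‖₊ :=
    Finset.single_le_sum (f := fun j' => ‖A i j'‖₊) (fun _ _ => zero_le) (Finset.mem_univ j)
  have h2 : (∑ j', ‖A i j'‖₊) ≤ Finset.univ.sup fun i' => ∑ j', ‖A i' j'‖₊ :=
    Finset.le_sup (f := fun i' => ∑ j', ‖A i' j'‖₊) (Finset.mem_univ i)
  have h3 : ‖A i j‖₊ ≤ ‖A‖₊ := by rw [h]; exact h1.trans h2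
  calc |A i j| = ‖A i j‖ := (Real.norm_eq_abs _).symm
    _ ≤ ‖A‖ := by exact_mod_cast h3

lemma dot_mulVec_abs_le {m k : Type*} [Fintype m] [Fintype k]
    (A : Matrix m k ℝ) (u : m → ℝ) (w : k → ℝ) :
    |u ⬝ᵥ (A *ᵥ w)| ≤ ‖A‖ * ((∑ i, |u i|) * (∑ j, |w j|)) := by
  calc |u ⬝ᵥ (A *ᵥ w)| = |∑ i, u i * ∑ j, A i j * w j| := by
        simp [dotProduct, Matrix.mulVec]
    _ ≤ ∑ i, |u i * ∑ j, A i j * w j| := Finset.abs_sum_le_sum_abs _ _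
    _ ≤ ∑ i, |u i| * (‖A‖ * ∑ j, |w j|) := by
        apply Finset.sum_le_sum
        intro i _
        rw [abs_mul]
        apply mul_le_mul_of_nonneg_left _ (abs_nonneg _)
        calc |∑ j, A i j * w j| ≤ ∑ j, |A i j * w j| := Finset.abs_sum_le_sum_abs _ _
          _ ≤ ∑ j, ‖A‖ * |w j| := by
              apply Finset.sum_le_sum; intro j _
              rw [abs_mul]
              exact mul_le_mul_of_nonneg_right (entry_abs_le_linfty A i j) (abs_nonneg _)
          _ = ‖A‖ * ∑ j, |w j| := by rw [Finset.mul_sum]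
    _ = ‖A‖ * ((∑ i, |u i|) * (∑ j, |w j|)) := by
        rw [← Finset.sum_mul]; ring

lemma amgm_aux (a b t : ℝ) (ht : 0 < t) : 2 * (a * b) ≤ t * a ^ 2 + b ^ 2 / t := by
  rw [← sub_nonneg]
  have h : t * a ^ 2 + b ^ 2 / t - 2 * (a * b) = (t * a - b) ^ 2 / t := by
    field_simp; ring
  rw [h]; positivity

/-- Schur-complement positivity estimate: let
`Q(ε) = [[I + M₁(ε), −M₂(ε)], [−M₂(ε)ᵀ, εI]]` be symmetric with `‖M₁(ε)‖ ≤ c₁ ε` and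
`‖M₂(ε)‖ ≤ c₂ ε` on `[0, ε₀]`. Then there are `c, ε* > 0` with `λ_min(Q(ε)) ≥ c ε`, i.e.
`Q(ε) − cε I ⪰ 0`, for all `ε ∈ (0, ε*)`. -/
theorem schur_complement_estimate (n p : ℕ)
    (M₁ : ℝ → Matrix (Fin n) (Fin n) ℝ) (M₂ : ℝ → Matrix (Fin n) (Fin p) ℝ)
    (c₁ c₂ ε₀ : ℝ) (hc₁ : 0 < c₁) (hc₂ : 0 < c₂) (hε₀ : 0 < ε₀)
    (hsym : ∀ ε ∈ Set.Icc (0:ℝ) ε₀, (M₁ ε).IsSymm)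
    (hM₁ : ∀ ε ∈ Set.Icc (0:ℝ) ε₀, ‖M₁ ε‖ ≤ c₁ * ε)
    (hM₂ : ∀ ε ∈ Set.Icc (0:ℝ) ε₀, ‖M₂ ε‖ ≤ c₂ * ε) :
    ∃ c > (0:ℝ), ∃ εs > (0:ℝ), ∀ ε ∈ Set.Ioo (0:ℝ) εs,
      ((Matrix.fromBlocks (1 + M₁ ε) (-(M₂ ε)) (-(M₂ ε)ᵀ)
          (ε • (1 : Matrix (Fin p) (Fin p) ℝ))) -
        (c * ε) • (1 : Matrix (Fin n ⊕ Fin p) (Fin n ⊕ Fin p) ℝ)).PosSemidef := by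
  obtain ⟨K, hK⟩ : ∃ K : ℝ, K = c₁ * n + 4 * c₂ ^ 2 * (p + 1) * n + 1 := ⟨_, rfl⟩
  have hKpos : (0:ℝ) < K := by rw [hK]; positivity
  refine ⟨1/2, by norm_num, min ε₀ (1/K), lt_min hε₀ (by positivity), ?_⟩
  intro ε hε
  obtain ⟨hε1, hε2⟩ := hε
  have hεε₀ : ε ∈ Set.Icc (0:ℝ) ε₀ := ⟨le_of_lt hε1, le_of_lt (lt_of_lt_of_le hε2 (min_le_left _ _))⟩
  have hεK : ε * K ≤ 1 := by
    have h := lt_of_lt_of_le hε2 (min_le_right _ _)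
    rw [div_eq_mul_inv, one_mul] at h
    calc ε * K ≤ K⁻¹ * K := mul_le_mul_of_nonneg_right h.le hKpos.le
      _ = 1 := inv_mul_cancel₀ hKpos.ne'
  have hsymε := hsym ε hεε₀
  have hM₁ε := hM₁ ε hεε₀
  have hM₂ε := hM₂ ε hεε₀
  refine Matrix.PosSemidef.of_dotProduct_mulVec_nonneg ?_ ?_
  · -- Hermitian
    apply Matrix.IsHermitian.sub
    · apply Matrix.IsHermitian.fromBlocks
      · rw [Matrix.IsHermitian, Matrix.conjTranspose_eq_transpose_of_trivial,
          Matrix.transpose_add, Matrix.transpose_one, hsymε.eq]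
      · rw [Matrix.conjTranspose_eq_transpose_of_trivial, Matrix.transpose_neg]
      · rw [Matrix.IsHermitian, Matrix.conjTranspose_eq_transpose_of_trivial,
          Matrix.transpose_smul, Matrix.transpose_one]
    · rw [Matrix.IsHermitian, Matrix.conjTranspose_eq_transpose_of_trivial,
        Matrix.transpose_smul, Matrix.transpose_one]
  · intro x
    set u : Fin n → ℝ := x ∘ Sum.inl with hu
    set v : Fin p → ℝ := x ∘ Sum.inr with hv
    have hx : x = Sum.elim u v := (Sum.elim_comp_inl_inr x).symm
    have hT : v ⬝ᵥ ((M₂ ε)ᵀ *ᵥ u) = u ⬝ᵥ (M₂ ε *ᵥ v) := by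
      rw [Matrix.mulVec_transpose, Matrix.dotProduct_mulVec, dotProduct_comm]
    rw [star_trivial, Matrix.sub_mulVec, Matrix.fromBlocks_mulVec, hx]
    simp only [Sum.elim_comp_inl, Sum.elim_comp_inr, Matrix.smul_mulVec,
      Matrix.one_mulVec, Matrix.add_mulVec, Matrix.neg_mulVec]
    rw [dotProduct_sub, sumElim_dotProduct_sumElim,
      dotProduct_smul, sumElim_dotProduct_sumElim]
    simp only [dotProduct_add, dotProduct_neg, dotProduct_smul,
      smul_eq_mul, hT]
    -- abbreviations
    set a2 : ℝ := u ⬝ᵥ u with ha2def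
    set b2 : ℝ := v ⬝ᵥ v with hb2def
    set T1 : ℝ := u ⬝ᵥ (M₁ ε *ᵥ u) with hT1def
    set T2 : ℝ := u ⬝ᵥ (M₂ ε *ᵥ v) with hT2def
    set Su : ℝ := ∑ i, |u i| with hSudef
    set Sv : ℝ := ∑ j, |v j| with hSvdef
    have ha2 : 0 ≤ a2 := Finset.sum_nonneg fun i _ => mul_self_nonneg _
    have hb2 : 0 ≤ b2 := Finset.sum_nonneg fun i _ => mul_self_nonneg _
    have hSu0 : 0 ≤ Su := Finset.sum_nonneg fun i _ => abs_nonneg _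
    have hSv0 : 0 ≤ Sv := Finset.sum_nonneg fun i _ => abs_nonneg _
    have hSu : Su ^ 2 ≤ n * a2 := by
      have h := sq_sum_le_card_mul_sum_sq (s := (Finset.univ : Finset (Fin n)))
        (f := fun i => |u i|)
      simpa [ha2def, dotProduct, sq_abs, sq] using h
    have hSv : Sv ^ 2 ≤ p * b2 := by
      have h := sq_sum_le_card_mul_sum_sq (s := (Finset.univ : Finset (Fin p)))
        (f := fun j => |v j|)
      simpa [hb2def, dotProduct, sq_abs, sq] using h
    -- bounds on T1 and T2
    have hT1b : |T1| ≤ c₁ * ε * (Su * Su) := by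
      calc |T1| ≤ ‖M₁ ε‖ * (Su * Su) := dot_mulVec_abs_le _ _ _
        _ ≤ c₁ * ε * (Su * Su) :=
          mul_le_mul_of_nonneg_right hM₁ε (mul_nonneg hSu0 hSu0)
    have hT2b : |T2| ≤ c₂ * ε * (Su * Sv) := by
      calc |T2| ≤ ‖M₂ ε‖ * (Su * Sv) := dot_mulVec_abs_le _ _ _
        _ ≤ c₂ * ε * (Su * Sv) :=
          mul_le_mul_of_nonneg_right hM₂ε (mul_nonneg hSu0 hSv0)
    have hf1 : -(c₁ * ε * ((n:ℝ) * a2)) ≤ T1 := by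
      have h1 : T1 ≥ -(c₁ * ε * (Su * Su)) := by
        have := neg_abs_le T1; linarith
      have h2 : c₁ * ε * (Su * Su) ≤ c₁ * ε * ((n:ℝ) * a2) := by
        apply mul_le_mul_of_nonneg_left _ (by positivity)
        calc Su * Su = Su ^ 2 := (sq Su).symm
          _ ≤ (n:ℝ) * a2 := hSu
      linarith
    -- AM-GM step
    have hppos : (0:ℝ) < 4 * c₂ * ((p:ℝ) + 1) := by positivity
    have hamgm : 2 * (Su * Sv) ≤ 4 * c₂ * ((p:ℝ) + 1) * Su ^ 2
        + Sv ^ 2 / (4 * c₂ * ((p:ℝ) + 1)) := amgm_aux Su Sv _ hppos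
    have hSv' : Sv ^ 2 / (4 * c₂ * ((p:ℝ) + 1)) ≤ b2 / (4 * c₂) := by
      rw [div_le_div_iff₀ hppos (by positivity)]
      have h1 : Sv ^ 2 * (4 * c₂) ≤ ((p:ℝ) * b2) * (4 * c₂) :=
        mul_le_mul_of_nonneg_right hSv (by positivity)
      nlinarith [mul_nonneg hb2 (le_of_lt hc₂)]
    have hf2 : 2 * T2 ≤ 4 * c₂ ^ 2 * ((p:ℝ) + 1) * (n:ℝ) * ε * a2 + ε * b2 / 4 := by
      have h1 : 2 * T2 ≤ 2 * (c₂ * ε * (Su * Sv)) := by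
        have := le_abs_self T2; linarith
      have h2 : c₂ * ε * (2 * (Su * Sv)) ≤
          c₂ * ε * (4 * c₂ * ((p:ℝ) + 1) * Su ^ 2 + Sv ^ 2 / (4 * c₂ * ((p:ℝ) + 1))) :=
        mul_le_mul_of_nonneg_left (by linarith [hamgm]) (by positivity)
      have h3 : c₂ * ε * (4 * c₂ * ((p:ℝ) + 1) * Su ^ 2) ≤
          c₂ * ε * (4 * c₂ * ((p:ℝ) + 1) * ((n:ℝ) * a2)) := by
        apply mul_le_mul_of_nonneg_left _ (by positivity)
        exact mul_le_mul_of_nonneg_left hSu (by positivity)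
      have h4 : c₂ * ε * (Sv ^ 2 / (4 * c₂ * ((p:ℝ) + 1))) ≤ c₂ * ε * (b2 / (4 * c₂)) :=
        mul_le_mul_of_nonneg_left hSv' (by positivity)
      have h5 : c₂ * ε * (b2 / (4 * c₂)) = ε * b2 / 4 := by
        field_simp
      linarith [h1, h2, h3, h4, h5]
    -- the K inequality multiplied by a2
    have hf3 : ε * K * a2 ≤ a2 := by
      have h := mul_le_mul_of_nonneg_right hεK ha2
      linarith
    rw [hK] at hf3
    linarith [hf1, hf2, hf3, mul_nonneg hε1.le ha2, mul_nonneg hε1.le hb2]
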